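/- Let k ≥ 1, m ≥ 1, n = k + m, and let S be a skew-symmetric n×n real matrix. Consider smooth functions of variables y_{ij} (1 ≤ i ≤ k, 1 ≤ j ≤ m) and nonzero variables d_1, …, d_n, with the bracket defined as the biderivation determined on coordinates by: {y_{ij}, y_{αβ}} = ½·(sign(α−i) − sign(β−j))·y_{iβ}·y_{αj}, {d_a, d_b} = −½·S_{ab}·d_a·d_b, and {y_{ij}, d_a} = 0. Define ỹ_{ij} = y_{ij}·d_{j+k}/d_i. Then for all i, α ∈ {1,…,k} and j, β ∈ {1,…,m}: {ỹ_{ij}, ỹ_{αβ}} = ½·(sign(α−i) − sign(β−j))·ỹ_{iβ}·ỹ_{αj} + ½·(S_{i,β+k} + S_{j+k,α} − S_{i,α} − S_{j+k,β+k})·ỹ_{ij}·ỹ_{αβ}. (This is the computation showing that the right action of the diagonal torus H^{−½S} on the open Schubert cell of G_k(n) with the standard Poisson homogeneous bracket produces the bracket {·,·}_S^{Gr}.) -/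

import Mathlib

/-- The domain with coordinates `y_{ij}` (`i ∈ [k]`, `j ∈ [m]`) and `d_a` (`a ∈ [n]`,
`n = k + m`). -/
abbrev Dom (k m : ℕ) := ((Fin k × Fin m) → ℝ) × (Fin (k + m) → ℝ)

/-- Partial derivative of `f` with respect to the coordinate `y_v` at `p`. -/
noncomputable def pdY {k m : ℕ} (f : Dom k m → ℝ) (v : Fin k × Fin m) (p : Dom k m) : ℝ :=
  fderiv ℝ f p (Pi.single v 1, 0)

/-- Partial derivative of `f` with respect to the coordinate `d_a` at `p`. -/
noncomputable def pdD {k m : ℕ} (f : Dom k m → ℝ) (a : Fin (k + m)) (p : Dom k m) : ℝ :=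
  fderiv ℝ f p (0, Pi.single a 1)

/-- The product bracket of the standard Poisson homogeneous bracket
`{y_{ij}, y_{αβ}} = ½(sign(α−i) − sign(β−j)) y_{iβ} y_{αj}` on the open Schubert cell and
the torus bracket `{d_a, d_b} = −½ S_{ab} d_a d_b` on `H^{−½S}`, with cross brackets zero,
extended to smooth functions as a biderivation. -/
noncomputable def cellTorusBracket {k m : ℕ} (S : Matrix (Fin (k + m)) (Fin (k + m)) ℝ)
    (f g : Dom k m → ℝ) (p : Dom k m) : ℝ :=
  (∑ v : Fin k × Fin m, ∑ w : Fin k × Fin m,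
      ((1 / 2 : ℝ) *
          ((Int.sign ((w.1 : ℤ) - (v.1 : ℤ)) - Int.sign ((w.2 : ℤ) - (v.2 : ℤ)) : ℤ) : ℝ)
        * p.1 (v.1, w.2) * p.1 (w.1, v.2)) * pdY f v p * pdY g w p)
  + ∑ a : Fin (k + m), ∑ b : Fin (k + m),
      (-(1 / 2 : ℝ) * S a b * p.2 a * p.2 b) * pdD f a p * pdD g b p

/-- `ỹ_{ij} = y_{ij} · d_{j+k} / d_i`, the coordinates of the point `X·D` for
`X = [1_k Y]` and `D = diag(d_1,…,d_n)`. -/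
noncomputable def ytil {k m : ℕ} (i : Fin k) (j : Fin m) (p : Dom k m) : ℝ :=
  p.1 (i, j) * p.2 (Fin.natAdd k j) / p.2 (Fin.castAdd m i)

noncomputable def E1 (k m : ℕ) (v : Fin k × Fin m) : Dom k m →L[ℝ] ℝ :=
  (ContinuousLinearMap.proj v).comp (ContinuousLinearMap.fst ℝ ((Fin k × Fin m) → ℝ) (Fin (k + m) → ℝ))

noncomputable def E2 (k m : ℕ) (a : Fin (k + m)) : Dom k m →L[ℝ] ℝ :=
  (ContinuousLinearMap.proj a).comp (ContinuousLinearMap.snd ℝ ((Fin k × Fin m) → ℝ) (Fin (k + m) → ℝ))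

theorem natAdd_ne_castAdd {k m : ℕ} (i : Fin k) (j : Fin m) :
    Fin.natAdd k j ≠ Fin.castAdd m i := by
  intro h
  have := congrArg Fin.val h
  simp [Fin.natAdd, Fin.castAdd] at this
  omega

theorem ytil_fderiv {k m : ℕ} (i : Fin k) (j : Fin m) (p : Dom k m)
    (hI : p.2 (Fin.castAdd m i) ≠ 0) (u : Dom k m) :
    fderiv ℝ (ytil i j) p u =
      (p.1 (i,j) * (E2 k m (Fin.natAdd k j)) u + p.2 (Fin.natAdd k j) * (E1 k m (i,j)) u)
        * (p.2 (Fin.castAdd m i))⁻¹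
      + p.1 (i,j) * p.2 (Fin.natAdd k j) *
          (-((p.2 (Fin.castAdd m i))^2)⁻¹ * (E2 k m (Fin.castAdd m i)) u) := by
  have h1 : HasFDerivAt (fun q : Dom k m => q.1 (i, j)) (E1 k m (i,j)) p :=
    (E1 k m (i,j)).hasFDerivAt
  have h2 : HasFDerivAt (fun q : Dom k m => q.2 (Fin.natAdd k j)) (E2 k m (Fin.natAdd k j)) p :=
    (E2 k m (Fin.natAdd k j)).hasFDerivAt
  have h3 : HasFDerivAt (fun q : Dom k m => q.2 (Fin.castAdd m i)) (E2 k m (Fin.castAdd m i)) p :=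
    (E2 k m (Fin.castAdd m i)).hasFDerivAt
  have h3i : HasFDerivAt (fun q : Dom k m => (q.2 (Fin.castAdd m i))⁻¹)
      ((ContinuousLinearMap.smulRight (1 : ℝ →L[ℝ] ℝ) (-((p.2 (Fin.castAdd m i))^2)⁻¹)).comp
        (E2 k m (Fin.castAdd m i))) p :=
    (hasFDerivAt_inv hI).comp p h3
  have h := (h1.fun_mul h2).fun_mul h3i
  have heq : ytil i j = fun q : Dom k m =>
      (q.1 (i, j) * q.2 (Fin.natAdd k j)) * (q.2 (Fin.castAdd m i))⁻¹ := by
    funext q; simp [ytil, div_eq_mul_inv]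
  rw [heq, h.fderiv]
  simp only [ContinuousLinearMap.add_apply, ContinuousLinearMap.smul_apply,
    ContinuousLinearMap.comp_apply, ContinuousLinearMap.smulRight_apply,
    ContinuousLinearMap.one_apply, smul_eq_mul]
  ring

theorem pdY_ytil {k m : ℕ} (i : Fin k) (j : Fin m) (p : Dom k m)
    (hI : p.2 (Fin.castAdd m i) ≠ 0) (v : Fin k × Fin m) :
    pdY (ytil i j) v p =
      (if v = (i, j) then p.2 (Fin.natAdd k j) / p.2 (Fin.castAdd m i) else 0) := by
  rw [pdY, ytil_fderiv i j p hI]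
  simp only [E1, E2, ContinuousLinearMap.comp_apply, ContinuousLinearMap.coe_fst', ContinuousLinearMap.coe_snd', ContinuousLinearMap.proj_apply, Pi.single_apply,
    Pi.zero_apply]
  by_cases h : v = (i, j)
  · subst h; simp [div_eq_mul_inv]
  · have h' : ¬ ((i, j) = v) := fun hh => h hh.symm
    simp [h, h']

theorem pdD_ytil {k m : ℕ} (i : Fin k) (j : Fin m) (p : Dom k m)
    (hI : p.2 (Fin.castAdd m i) ≠ 0) (a : Fin (k + m)) :
    pdD (ytil i j) a p =
      (if a = Fin.natAdd k j then p.1 (i, j) / p.2 (Fin.castAdd m i) else 0)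
      - (if a = Fin.castAdd m i then
          p.1 (i, j) * p.2 (Fin.natAdd k j) / (p.2 (Fin.castAdd m i))^2 else 0) := by
  rw [pdD, ytil_fderiv i j p hI]
  simp only [E1, E2, ContinuousLinearMap.comp_apply, ContinuousLinearMap.coe_fst', ContinuousLinearMap.coe_snd', ContinuousLinearMap.proj_apply, Pi.single_apply,
    Pi.zero_apply]
  have hIJ := natAdd_ne_castAdd i j
  by_cases hJ : a = Fin.natAdd k j
  · subst hJ
    simp [hIJ, Ne.symm hIJ, div_eq_mul_inv]
  · by_cases hI' : a = Fin.castAdd m i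
    · subst hI'
      have h1 : ¬ (Fin.castAdd m i = Fin.natAdd k j) := Ne.symm hIJ
      simp [h1, hJ, hIJ, div_eq_mul_inv]
    · have h1 : ¬ (Fin.natAdd k j = a) := fun h => hJ h.symm
      have h2 : ¬ (Fin.castAdd m i = a) := fun h => hI' h.symm
      simp [hJ, hI', h1, h2]

/-- The right torus action on the open Schubert cell of `G_k(n)` produces the bracket
`{·,·}_S^{Gr}`: in the product structure on `G_k(n)^{0} × H^{−½S}`, the functions
`ỹ_{ij} = y_{ij} d_{j+k}/d_i` satisfy
`{ỹ_{ij}, ỹ_{αβ}} = ½(sign(α−i) − sign(β−j)) ỹ_{iβ} ỹ_{αj}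
  + ½(S_{i,β+k} + S_{j+k,α} − S_{i,α} − S_{j+k,β+k}) ỹ_{ij} ỹ_{αβ}`. -/
theorem torus_action_gives_grassmannian_bracket (k m : ℕ) (hk : 1 ≤ k) (hm : 1 ≤ m)
    (S : Matrix (Fin (k + m)) (Fin (k + m)) ℝ) (hS : Matrix.transpose S = -S)
    (p : Dom k m) (hp : ∀ a, p.2 a ≠ 0)
    (i α : Fin k) (j β : Fin m) :
    cellTorusBracket S (ytil i j) (ytil α β) p
      = (1 / 2 : ℝ) *
          ((Int.sign ((α : ℤ) - (i : ℤ)) - Int.sign ((β : ℤ) - (j : ℤ)) : ℤ) : ℝ)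
          * ytil i β p * ytil α j p
        + (1 / 2 : ℝ) *
            (S (Fin.castAdd m i) (Fin.natAdd k β) + S (Fin.natAdd k j) (Fin.castAdd m α)
              - S (Fin.castAdd m i) (Fin.castAdd m α)
              - S (Fin.natAdd k j) (Fin.natAdd k β))
          * ytil i j p * ytil α β p := by
  rw [cellTorusBracket]
  simp only [pdY_ytil i j p (hp _), pdY_ytil α β p (hp _),
    pdD_ytil i j p (hp _), pdD_ytil α β p (hp _)]
  simp only [mul_ite, ite_mul, mul_zero, zero_mul, mul_sub, sub_mul,
    Finset.sum_sub_distrib, Finset.sum_ite_eq', Finset.mem_univ, if_true]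
  rw [ytil, ytil, ytil, ytil]
  have hI := hp (Fin.castAdd m i)
  have hA := hp (Fin.castAdd m α)
  field_simp
  ring
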